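/- arXiv:0809.4351 — 3 statements merged into one kernel-verified Lean document; each statement's English description precedes it below -/
import Mathlib

section
/- Let M be an effective t-motif over K such that M ⊗_{K[t]} K^s[t] admits a K^s[t]-basis of σ-invariant elements (σ being extended semilinearly, acting as the q-th power map on coefficients in K^s). Then there exist a finite-dimensional K-vector space V together with an additive map σ_V : V → V satisfying σ_V(x·v) = x^q·σ_V(v) and K·σ_V(V) = V, and an injective K[t]-linear map ι : M → V ⊗_K K[t] satisfying ι∘σ = σ′∘ι, where σ′ is the τ-semilinear map on V ⊗_K K[t] determined by σ′(v⊗f) = σ_V(v)⊗τ(f). (Every t-motif trivialized over K^s is a submotif of one of the form M(V); such M are the Artin t-motifs.) -/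
/-!
STATEMENT 15. `k` is the finite field with `q = p ^ n` elements, `K ⊇ k` a field,
`K^s` (= `Ks`) a separable closure of `K`, `θ ∈ K`.  An effective t-motif over `K` is
represented (via a `K[t]`-basis) by the column module `M = Fin r → K[t]` with
`σ(v) = S ⬝ τ(v)`, `det S = u (t-θ)^d`, `u ∈ Kˣ`; `M ⊗_{K[t]} K^s[t]` is
`Fin r → K^s[t]` with `σ(v) = S ⬝ τ(v)` (`τ` = coefficientwise `q`-th power).

A pair `(V, σ_V)` with `V` finite-dimensional over `K`, `σ_V` additive with
`σ_V(x·v) = x^q·σ_V(v)` and `K·σ_V(V) = V` is encoded, via a basis `V ≅ Fin m → K`,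
by the matrix `A` with `σ_V(v) = A ⬝ v^{(q)}`; the induced motif `M(V) = V ⊗_K K[t]`
is `Fin m → K[t]` with `σ'(w) = A ⬝ τ(w)`.

Statement: if `M ⊗ K^s[t]` admits a `K^s[t]`-basis of σ-invariant elements (encoded by
an invertible matrix `E` over `K^s[t]` with σ-invariant columns), then there exist such
a pair `(V, σ_V)` (i.e. `m` and `A` with the span condition `K·σ_V(V) = V`) and an
injective `K[t]`-linear map `ι : M → V ⊗_K K[t]` with `ι ∘ σ = σ' ∘ ι`.
-/

open Polynomial

noncomputable section Aux15

variable {F L ι : Type} [Field F] [Field L] [Algebra F L]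

/-- Coordinatewise polynomial map with respect to a basis of `L` over `F`. -/
def coordPoly15 (b : Module.Basis ι F L) (j : ι) (f : L[X]) : F[X] :=
  ⟨⟨f.toFinsupp.coeff.mapRange (fun a => b.repr a j) (by simp)⟩⟩

lemma coordPoly15_coeff (b : Module.Basis ι F L) (j : ι) (f : L[X]) (k : ℕ) :
    (coordPoly15 b j f).coeff k = b.repr (f.coeff k) j := by
  rcases f with ⟨f⟩; simp [coordPoly15, coeff]

lemma coordPoly15_add (b : Module.Basis ι F L) (j : ι) (f g : L[X]) :
    coordPoly15 b j (f + g) = coordPoly15 b j f + coordPoly15 b j g := by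
  ext k; simp [coordPoly15_coeff]

lemma coordPoly15_map_mul (b : Module.Basis ι F L) (j : ι) (g : F[X]) (f : L[X]) :
    coordPoly15 b j (g.map (algebraMap F L) * f) = g * coordPoly15 b j f := by
  ext k
  simp only [coordPoly15_coeff, coeff_mul]
  rw [map_sum, Finset.sum_apply']
  apply Finset.sum_congr rfl
  intro x _
  rw [coeff_map, ← Algebra.smul_def, map_smul]
  simp [coordPoly15_coeff]

lemma coordPoly15_eq_zero (b : Module.Basis ι F L) (f : L[X])
    (h : ∀ j, coordPoly15 b j f = 0) : f = 0 := by
  ext k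
  have h1 : ∀ j, b.repr (f.coeff k) j = 0 := fun j => by
    have := congrArg (fun q => q.coeff k) (h j)
    simpa [coordPoly15_coeff] using this
  have h2 : b.repr (f.coeff k) = 0 := Finsupp.ext fun j => h1 j
  simpa using congrArg b.repr.symm h2

lemma repr_pow15 [Fintype ι] (b : Module.Basis ι F L) (p n : ℕ) [Fact p.Prime] [CharP L p]
    (x : L) (j : ι) :
    b.repr (x ^ p ^ n) j = ∑ j', b.repr ((b j') ^ p ^ n) j * (b.repr x j') ^ p ^ n := by
  haveI : ExpChar L p := ExpChar.prime Fact.out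
  conv_lhs => rw [← Module.Basis.sum_repr b x, ← iterateFrobenius_def (R := L) p n, map_sum]
  simp only [iterateFrobenius_def, map_sum, Finset.sum_apply']
  apply Finset.sum_congr rfl
  intro j' _
  rw [_root_.smul_pow, map_smul]
  simp [mul_comm]

lemma coordPoly15_frob [Fintype ι] (b : Module.Basis ι F L) (p n : ℕ) [Fact p.Prime]
    [CharP F p] [CharP L p] (j : ι) (f : L[X]) :
    coordPoly15 b j (f.map (iterateFrobenius L p n)) =
      ∑ j', C (b.repr ((b j') ^ p ^ n) j) *
        (coordPoly15 b j' f).map (iterateFrobenius F p n) := by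
  haveI : ExpChar F p := ExpChar.prime Fact.out
  haveI : ExpChar L p := ExpChar.prime Fact.out
  ext k
  rw [coordPoly15_coeff, coeff_map, iterateFrobenius_def, repr_pow15 b p n]
  rw [finset_sum_coeff]
  apply Finset.sum_congr rfl
  intro j' _
  rw [coeff_C_mul, coeff_map, iterateFrobenius_def, coordPoly15_coeff]

lemma span_pow15 {ξ : Type} [Fintype ξ] [DecidableEq ξ] (K : Type) [Field K]
    (B : Matrix ξ ξ K) (q : ℕ) (hq : q ≠ 0) (hsurj : Function.Surjective B.mulVec) :
    Submodule.span K (Set.range fun v : ξ → K => B.mulVec fun i => v i ^ q) = ⊤ := by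
  rw [eq_top_iff]
  rintro y -
  obtain ⟨w, rfl⟩ := hsurj y
  have h1 : ∀ x0 : ξ, B.mulVec (Pi.single x0 (1 : K)) ∈
      Submodule.span K (Set.range fun v : ξ → K => B.mulVec fun i => v i ^ q) := by
    intro x0
    apply Submodule.subset_span
    refine ⟨Pi.single x0 1, ?_⟩
    have hps : (fun i => (Pi.single x0 (1 : K)) i ^ q) = (Pi.single x0 1 : ξ → K) := by
      funext i
      rcases eq_or_ne i x0 with h | h <;> simp [h, Pi.single_apply, zero_pow hq]
    exact congrArg B.mulVec hps
  have hBw : B.mulVec w = ∑ x, w x • B.mulVec (Pi.single x 1) := by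
    funext i
    rw [Finset.sum_apply]
    simp only [Matrix.mulVec_single, mul_one, Pi.smul_apply, smul_eq_mul]
    simp [Matrix.mulVec, dotProduct, mul_comm]
  rw [hBw]
  exact Submodule.sum_mem _ fun x _ => Submodule.smul_mem _ _ (h1 x)

lemma mulVec_mul15 {R : Type} [CommRing R] {r : ℕ} (M : Matrix (Fin r) (Fin r) R) (g : R)
    (x : Fin r → R) : M.mulVec (fun i => g * x i) = fun i => g * M.mulVec x i := by
  funext i
  simp [Matrix.mulVec, dotProduct, Finset.mul_sum, mul_left_comm]

end Aux15

theorem stmt_15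
    (p n : ℕ) [Fact p.Prime] (hn : 0 < n)
    (K : Type) [Field K] [CharP K p] (θ : K)
    (Ks : Type) [Field Ks] [Algebra K Ks] [CharP Ks p] [IsSepClosure K Ks]
    (r : ℕ) (S : Matrix (Fin r) (Fin r) (Polynomial K))
    (u : Kˣ) (d : ℕ)
    (hdet : S.det = C (u : K) * (X - C θ) ^ d)
    -- `M ⊗ K^s[t]` admits a `K^s[t]`-basis of σ-invariant elements:
    (htriv : ∃ E E' : Matrix (Fin r) (Fin r) (Polynomial Ks),
      E * E' = 1 ∧ E' * E = 1 ∧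
      ∀ j, (S.map (Polynomial.mapRingHom (algebraMap K Ks))).mulVec
          (fun i => Polynomial.mapRingHom (iterateFrobenius Ks p n) (E i j)) =
        fun i => E i j) :
    ∃ (m : ℕ) (A : Matrix (Fin m) (Fin m) K),
      -- `K · σ_V(V) = V`:
      Submodule.span K
        (Set.range fun v : Fin m → K => A.mulVec fun i => v i ^ p ^ n) = ⊤ ∧
      -- an injective morphism `ι : M → M(V) = V ⊗_K K[t]`:
      ∃ ι : (Fin r → Polynomial K) →ₗ[Polynomial K] (Fin m → Polynomial K),
        Function.Injective ι ∧
        ∀ v : Fin r → Polynomial K,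
          ι (S.mulVec fun i => Polynomial.mapRingHom (iterateFrobenius K p n) (v i)) =
            (A.map Polynomial.C).mulVec
              fun i => Polynomial.mapRingHom (iterateFrobenius K p n) (ι v i) := by
  classical
  obtain ⟨E, E', hEE', hE'E, hsig⟩ := htriv
  haveI : Algebra.IsSeparable K Ks := IsSepClosure.separable
  set τKs : Polynomial Ks →+* Polynomial Ks := mapRingHom (iterateFrobenius Ks p n) with hτKs
  set τK : Polynomial K →+* Polynomial K := mapRingHom (iterateFrobenius K p n) with hτK
  set S' : Matrix (Fin r) (Fin r) (Polynomial Ks) := S.map ⇑(mapRingHom (algebraMap K Ks))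
    with hS'
  -- matrix form of σ-invariance
  have hmat : S' * E.map ⇑τKs = E := by
    refine Matrix.ext fun i j => ?_
    have := congrFun (hsig j) i
    simpa [Matrix.mul_apply, Matrix.mulVec, dotProduct, Matrix.map_apply] using this
  have h1 : E.map ⇑τKs * E'.map ⇑τKs = 1 := by
    rw [← Matrix.map_mul, hEE', Matrix.map_one _ (map_zero τKs) (map_one τKs)]
  have hkey : E' * S' = E'.map ⇑τKs := by
    calc E' * S' = E' * S' * (E.map ⇑τKs * E'.map ⇑τKs) := by rw [h1, mul_one]
    _ = E' * (S' * E.map ⇑τKs) * E'.map ⇑τKs := by simp only [mul_assoc]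
    _ = E' * E * E'.map ⇑τKs := by rw [hmat]
    _ = E'.map ⇑τKs := by rw [hE'E, one_mul]
  -- the intermediate field generated by the coefficients of E'
  set Sset : Set Ks := ⋃ (i : Fin r) (j : Fin r), ((E' i j).coeffs : Set Ks) with hSset
  have hSfin : Sset.Finite :=
    Set.finite_iUnion fun i => Set.finite_iUnion fun j => (E' i j).coeffs.finite_toSet
  haveI := hSfin.to_subtype
  set L : IntermediateField K Ks := IntermediateField.adjoin K Sset with hL
  haveI : FiniteDimensional K L :=
    IntermediateField.finiteDimensional_adjoin fun x _ =>
      (Algebra.IsIntegral.isIntegral x)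
  haveI : CharP L p := charP_of_injective_algebraMap (algebraMap K L).injective p
  haveI : Algebra.IsSeparable K L := Algebra.isSeparable_tower_bot_of_isSeparable K L Ks
  haveI : ExpChar K p := ExpChar.prime Fact.out
  -- the matrix E' over L
  have hmem : ∀ i j k, (E' i j).coeff k ∈ L := by
    intro i j k
    by_cases h : (E' i j).coeff k = 0
    · rw [h]; exact zero_mem _
    · exact IntermediateField.subset_adjoin _ _
        (Set.mem_iUnion.2 ⟨i, Set.mem_iUnion.2 ⟨j, Polynomial.coeff_mem_coeffs h⟩⟩)
  set Ep : Matrix (Fin r) (Fin r) (Polynomial L) := fun i j =>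
    ∑ k ∈ (E' i j).support, Polynomial.C (⟨(E' i j).coeff k, hmem i j k⟩ : L) * X ^ k
    with hEpdef
  set ψ : Polynomial L →+* Polynomial Ks := mapRingHom (algebraMap L Ks) with hψ
  have hEp : ∀ i j, ψ (Ep i j) = E' i j := by
    intro i j
    rw [hEpdef]
    simp only [map_sum, map_mul, map_pow, hψ, coe_mapRingHom, map_C, map_X]
    conv_rhs => rw [(E' i j).as_sum_support]
    apply Finset.sum_congr rfl
    intro k _
    rw [C_mul_X_pow_eq_monomial]
    rfl
  set τL : Polynomial L →+* Polynomial L := mapRingHom (iterateFrobenius L p n) with hτL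
  set SL : Matrix (Fin r) (Fin r) (Polynomial L) := S.map ⇑(mapRingHom (algebraMap K L))
    with hSL
  have hψSL : SL.map ⇑ψ = S' := by
    refine Matrix.ext fun i j => ?_
    simp only [hSL, hS', hψ, Matrix.map_apply, coe_mapRingHom, Polynomial.map_map]
    rw [← IsScalarTower.algebraMap_eq]
  have hcompL : (algebraMap (↥L) Ks).comp (iterateFrobenius (↥L) p n)
      = (iterateFrobenius Ks p n).comp (algebraMap (↥L) Ks) := by
    ext x
    simp [iterateFrobenius_def, map_pow]
  have hcommL : ∀ f : Polynomial L, ψ (τL f) = τKs (ψ f) := fun f => by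
    simp only [hψ, hτL, hτKs, coe_mapRingHom, Polynomial.map_map, hcompL]
  have hcompK : (algebraMap K (↥L)).comp (iterateFrobenius K p n)
      = (iterateFrobenius (↥L) p n).comp (algebraMap K (↥L)) := by
    ext x
    simp [iterateFrobenius_def, map_pow]
  have hcommK : ∀ f : Polynomial K,
      (mapRingHom (algebraMap K L)) (τK f) = τL ((mapRingHom (algebraMap K L)) f) := fun f => by
    simp only [hτK, hτL, coe_mapRingHom, Polynomial.map_map, hcompK]
  have hψinj : Function.Injective ⇑ψ :=
    Polynomial.map_injective _ (algebraMap L Ks).injective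
  -- the key identity over L
  have hEpSL : Ep * SL = Ep.map ⇑τL := by
    have hmaps : (Ep * SL).map ⇑ψ = (Ep.map ⇑τL).map ⇑ψ := by
      rw [Matrix.map_mul]
      have h2 : Ep.map ⇑ψ = E' := Matrix.ext fun i j => hEp i j
      rw [h2, hψSL, hkey]
      rw [Matrix.map_map]
      refine Matrix.ext fun i j => ?_
      simp only [Matrix.map_apply, Function.comp_apply, ← h2]
      exact (hcommL (Ep i j)).symm
    refine Matrix.ext fun i j => hψinj ?_
    have h3 : ((Ep * SL).map ⇑ψ) i j = ((Ep.map ⇑τL).map ⇑ψ) i j := by rw [hmaps]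
    simpa [Matrix.map_apply] using h3
  -- basis of L over K
  set sdim := Module.finrank K (↥L) with hsdim
  set b : Module.Basis (Fin sdim) K (↥L) := Module.finBasis K (↥L) with hb
  have hqne : p ^ n ≠ 0 := pow_ne_zero n (Fact.out : p.Prime).ne_zero
  -- block diagonal matrix A₀
  set A₀ : Matrix (Fin r × Fin sdim) (Fin r × Fin sdim) K := fun x y =>
    if x.1 = y.1 then b.repr ((b y.2) ^ p ^ n) x.2 else 0 with hA₀
  -- surjectivity of A₀
  have hA'surj : ∀ y : Fin sdim → K, ∃ c : Fin sdim → K,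
      ∀ j, (∑ j', b.repr ((b j') ^ p ^ n) j * c j') = y j := by
    intro y
    have hspan : Submodule.span K (Set.range fun x => (b x) ^ p ^ n) = ⊤ :=
      Field.span_map_pow_expChar_pow_eq_top_of_isSeparable p n b.span_eq
    have hy : b.equivFun.symm y ∈ Submodule.span K (Set.range fun x => (b x) ^ p ^ n) := by
      rw [hspan]; trivial
    obtain ⟨c, hc⟩ := (Submodule.mem_span_range_iff_exists_fun K).mp hy
    refine ⟨c, fun j => ?_⟩
    have h5 := congrArg (fun z => b.repr z j) hc
    simp only [map_sum, LinearEquiv.map_smul, Finset.sum_apply', Finsupp.smul_apply, smul_eq_mul] at h5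
    have h6 : b.repr (b.equivFun.symm y) j = y j := by
      have := congrFun (b.equivFun.apply_symm_apply y) j
      rwa [Module.Basis.equivFun_apply] at this
    rw [← h6, ← h5]
    exact Finset.sum_congr rfl fun j' _ => mul_comm _ _
  have hA0surj : Function.Surjective A₀.mulVec := by
    intro y
    choose c hc using fun i => hA'surj (fun j => y (i, j))
    refine ⟨fun x => c x.1 x.2, ?_⟩
    funext z
    obtain ⟨i, j⟩ := z
    simp only [Matrix.mulVec, dotProduct, hA₀, Fintype.sum_prod_type, ite_mul, zero_mul]
    rw [Finset.sum_comm]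
    simp only [Finset.sum_ite_eq, Finset.mem_univ, if_true]
    exact hc i j
  -- the map into coordinates
  set wv : (Fin r → Polynomial K) → (Fin r → Polynomial L) := fun v =>
    Ep.mulVec (fun i => (mapRingHom (algebraMap K (↥L))) (v i)) with hwv
  set ι₀ : (Fin r → Polynomial K) → ((Fin r × Fin sdim) → Polynomial K) := fun v x =>
    coordPoly15 b x.2 (wv v x.1) with hι₀
  have hι₀add : ∀ v v', ι₀ (v + v') = ι₀ v + ι₀ v' := by
    intro v v'
    funext x
    have hwadd : wv (v + v') = wv v + wv v' := by
      rw [hwv]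
      show Ep.mulVec (fun i => (mapRingHom (algebraMap K (↥L))) ((v + v') i)) = _
      rw [show (fun i => (mapRingHom (algebraMap K (↥L))) ((v + v') i))
          = (fun i => (mapRingHom (algebraMap K (↥L))) (v i))
            + (fun i => (mapRingHom (algebraMap K (↥L))) (v' i)) from
        funext fun i => by simp [map_add], Matrix.mulVec_add]
    simp only [hι₀, hwadd, Pi.add_apply, coordPoly15_add]
  have hι₀smul : ∀ (g : Polynomial K) v, ι₀ (g • v) = g • ι₀ v := by
    intro g v
    funext x
    have h7 : wv (g • v) = fun i => (mapRingHom (algebraMap K (↥L))) g * wv v i := by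
      rw [hwv]
      show Ep.mulVec (fun i => (mapRingHom (algebraMap K (↥L))) ((g • v) i)) = _
      rw [show (fun i => (mapRingHom (algebraMap K (↥L))) ((g • v) i))
          = (fun i => (mapRingHom (algebraMap K (↥L))) g
              * (mapRingHom (algebraMap K (↥L))) (v i)) from
        funext fun i => by simp [smul_eq_mul, map_mul], mulVec_mul15]
    simp only [hι₀, h7, Pi.smul_apply, smul_eq_mul]
    rw [show (mapRingHom (algebraMap K (↥L))) g * wv v x.1
        = g.map (algebraMap K (↥L)) * wv v x.1 from rfl]
    rw [coordPoly15_map_mul]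
  set ι₀lin : (Fin r → Polynomial K) →ₗ[Polynomial K] ((Fin r × Fin sdim) → Polynomial K) :=
    { toFun := ι₀
      map_add' := hι₀add
      map_smul' := hι₀smul } with hι₀lin
  -- injectivity
  have hKtoKs : ∀ f : Polynomial K,
      ψ ((mapRingHom (algebraMap K (↥L))) f) = (mapRingHom (algebraMap K Ks)) f := by
    intro f
    simp only [hψ, coe_mapRingHom, Polynomial.map_map]
    rw [← IsScalarTower.algebraMap_eq]
  have hEpψ : Ep.map ⇑ψ = E' := Matrix.ext fun i j => hEp i j
  have hι₀inj : Function.Injective ι₀ := by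
    have hker : ∀ v, ι₀ v = 0 → v = 0 := by
      intro v hv
      have hw0 : ∀ i, wv v i = 0 := by
        intro i
        apply coordPoly15_eq_zero b
        intro j
        exact congrFun hv (i, j)
      have hKs : E'.mulVec (fun i' => (mapRingHom (algebraMap K Ks)) (v i')) = 0 := by
        funext i
        have h8 := congrArg ψ (hw0 i)
        rw [map_zero] at h8
        rw [hwv] at h8
        rw [RingHom.map_mulVec, hEpψ] at h8
        rw [show (⇑ψ ∘ fun i => (mapRingHom (algebraMap K (↥L))) (v i))
            = fun i => (mapRingHom (algebraMap K Ks)) (v i) from funext fun i => hKtoKs (v i)] at h8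
        exact h8
      have hvKs : (fun i => (mapRingHom (algebraMap K Ks)) (v i)) = 0 := by
        have h9 : E.mulVec (E'.mulVec (fun i => (mapRingHom (algebraMap K Ks)) (v i)))
            = fun i => (mapRingHom (algebraMap K Ks)) (v i) := by
          rw [Matrix.mulVec_mulVec, hEE', Matrix.one_mulVec]
        rw [hKs, Matrix.mulVec_zero] at h9
        exact h9.symm
      funext i
      have := congrFun hvKs i
      simp only [Pi.zero_apply] at this ⊢
      exact Polynomial.map_injective _ (algebraMap K Ks).injective
        (by simpa [coe_mapRingHom] using this)
    intro v v' h
    have h0 : ι₀ (v - v') = 0 := by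
      have h10 : ι₀lin (v - v') = ι₀lin v - ι₀lin v' := map_sub _ _ _
      rw [show ι₀lin v = ι₀ v from rfl, show ι₀lin v' = ι₀ v' from rfl,
        show ι₀lin (v - v') = ι₀ (v - v') from rfl, h] at h10
      rw [h10, sub_self]
    have := hker _ h0
    rwa [sub_eq_zero] at this
  -- the intertwining identity at the (Fin r × Fin sdim) level
  have hwτ : ∀ v : Fin r → Polynomial K,
      wv (S.mulVec fun i => τK (v i)) = fun i => τL (wv v i) := by
    intro v
    funext i
    rw [hwv]
    show Ep.mulVec (fun i' => (mapRingHom (algebraMap K (↥L)))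
      ((S.mulVec fun i => τK (v i)) i')) i = _
    have e1 : (fun i' => (mapRingHom (algebraMap K (↥L))) ((S.mulVec fun i => τK (v i)) i'))
        = SL.mulVec (fun i' => τL ((mapRingHom (algebraMap K (↥L))) (v i'))) := by
      funext i'
      rw [RingHom.map_mulVec]
      rw [show S.map ⇑(mapRingHom (algebraMap K (↥L))) = SL from rfl]
      congr 1
      funext i''
      exact hcommK (v i'')
    rw [e1, Matrix.mulVec_mulVec, hEpSL]
    exact (RingHom.map_mulVec τL Ep _ i).symm
  have hint : ∀ (v : Fin r → Polynomial K) (x : Fin r × Fin sdim),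
      ι₀ (S.mulVec fun i => τK (v i)) x
        = ∑ j', C (b.repr ((b j') ^ p ^ n) x.2) * τK (ι₀ v (x.1, j')) := by
    intro v x
    rw [hι₀]
    show coordPoly15 b x.2 (wv (S.mulVec fun i => τK (v i)) x.1) = _
    rw [hwτ v]
    show coordPoly15 b x.2 ((wv v x.1).map (iterateFrobenius (↥L) p n)) = _
    rw [coordPoly15_frob b p n x.2 (wv v x.1)]
    rfl
  -- the computation of the block matrix action
  have hblock : ∀ (u : Fin r × Fin sdim → Polynomial K) (z : Fin r × Fin sdim),
      ((A₀.map C).mulVec fun y => τK (u y)) z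
        = ∑ j', C (b.repr ((b j') ^ p ^ n) z.2) * τK (u (z.1, j')) := by
    intro u z
    obtain ⟨i, j⟩ := z
    simp only [Matrix.mulVec, dotProduct, Matrix.map_apply]
    simp only [hA₀,
      Fintype.sum_prod_type, apply_ite C, map_zero, ite_mul, zero_mul]
    rw [Finset.sum_comm]
    simp only [Finset.sum_ite_eq, Finset.mem_univ, if_true]
  -- assemble the final data via the equivalence with Fin (r * sdim)
  refine ⟨r * sdim, A₀.submatrix ⇑finProdFinEquiv.symm ⇑finProdFinEquiv.symm, ?_, ?_⟩
  · apply span_pow15 _ _ _ hqne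
    intro y
    obtain ⟨w0, hw0⟩ := hA0surj (y ∘ ⇑finProdFinEquiv)
    refine ⟨w0 ∘ ⇑finProdFinEquiv.symm, ?_⟩
    rw [Matrix.submatrix_mulVec_equiv]
    funext x
    have h11 : (w0 ∘ ⇑finProdFinEquiv.symm) ∘ ⇑finProdFinEquiv.symm.symm = w0 := by
      funext z
      simp only [Function.comp_apply, Equiv.symm_symm, Equiv.symm_apply_apply]
    rw [h11]
    show (A₀.mulVec w0) (finProdFinEquiv.symm x) = y x
    rw [hw0]
    exact congrArg y (finProdFinEquiv.apply_symm_apply x)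
  · set ιfin : (Fin r → Polynomial K) →ₗ[Polynomial K] (Fin (r * sdim) → Polynomial K) :=
      { toFun := fun v x => ι₀ v (finProdFinEquiv.symm x)
        map_add' := fun v v' => by
          funext x
          show ι₀ (v + v') (finProdFinEquiv.symm x)
            = ι₀ v (finProdFinEquiv.symm x) + ι₀ v' (finProdFinEquiv.symm x)
          rw [hι₀add]
          rfl
        map_smul' := fun g v => by
          funext x
          show ι₀ (g • v) (finProdFinEquiv.symm x) = g * ι₀ v (finProdFinEquiv.symm x)
          rw [hι₀smul]
          rfl } with hιfin
    refine ⟨ιfin, ?_, ?_⟩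
    · intro v v' h
      apply hι₀inj
      funext z
      have h14 := congrFun h (finProdFinEquiv z)
      rw [hιfin] at h14
      simpa only [LinearMap.coe_mk, AddHom.coe_mk, Equiv.symm_apply_apply] using h14
    · intro v
      funext x
      show ι₀ (S.mulVec fun i => τK (v i)) (finProdFinEquiv.symm x)
        = ((A₀.submatrix ⇑finProdFinEquiv.symm ⇑finProdFinEquiv.symm).map ⇑C).mulVec
            (fun i => τK (ι₀ v (finProdFinEquiv.symm i))) x
      have h12 : ((fun i => τK (ι₀ v (finProdFinEquiv.symm i))) ∘ ⇑finProdFinEquiv.symm.symm)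
          = fun y => τK (ι₀ v y) := by
        funext z
        simp only [Function.comp_apply, Equiv.symm_symm, Equiv.symm_apply_apply]
      rw [hint v, ← Matrix.submatrix_map, Matrix.submatrix_mulVec_equiv, h12]
      exact (hblock (ι₀ v) (finProdFinEquiv.symm x)).symm
end

section
/- Let K be separably closed. For coprime pairs of integers (r,s) and (r′,s′) with r,r′ > 0 and s/r ≠ s′/r′, every morphism of Dieudonné t-modules V_{s/r} → V_{s′/r′} (i.e. every K((t⁻¹))-linear map commuting with the respective maps σ) is zero. -/
/-!
STATEMENT 16. `K` is a separably closed field containing the finite field with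
`q = p ^ n` elements.  `L = K((t⁻¹))` is the field of formal Laurent series in
`u = t⁻¹` (formalized as `LaurentSeries K`, in which `t` is the element
`single (-1) 1`), and `τ` is the endomorphism of `L` fixing `t` and raising every
coefficient to the `q`-th power (the coefficientwise map `HahnSeries.map`).

For `λ = s/r` in lowest terms (`r > 0`), the Dieudonné t-module `V_λ` is
`L e₁ ⊕ ⋯ ⊕ L e_r` with `σ(eᵢ) = eᵢ₊₁` (`i < r`), `σ(e_r) = t^s e₁`; identifying
`V_λ = Fin r → L`, `σ(v) = T_{r,s} ⬝ τ(v)` with the matrix `T_{r,s}` below.  A morphism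
`V_{s/r} → V_{s'/r'}` is an `L`-linear map `G` with `G ∘ σ = σ ∘ G`, i.e.
`G ⬝ T_{r,s} = T_{r',s'} ⬝ τ(G)`.

Statement: if `s/r ≠ s'/r'` (i.e. `s·r' ≠ s'·r`) then every morphism
`V_{s/r} → V_{s'/r'}` is zero.
-/

/-- The coefficientwise `q`-th power map `τ` on `L = K((t⁻¹))`. -/
noncomputable def tauLaurent (p n : ℕ) [Fact p.Prime] (K : Type) [Field K] [CharP K p]
    (x : LaurentSeries K) : LaurentSeries K :=
  x.map (iterateFrobenius K p n)

/-- The element `t` of `L = K((t⁻¹))` (the inverse of the local parameter `t⁻¹`). -/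
noncomputable def tElem (K : Type) [Field K] : LaurentSeries K :=
  HahnSeries.single (-1 : ℤ) (1 : K)

/-- The matrix of `σ` on the Dieudonné t-module `V_{s/r}`:
`σ(eⱼ) = eⱼ₊₁` for `j < r - 1` and `σ(e_{r-1}) = t^s e₀`. -/
noncomputable def dieudonneMatrix (K : Type) [Field K] (r : ℕ) (s : ℤ) :
    Matrix (Fin r) (Fin r) (LaurentSeries K) :=
  Matrix.of fun i j =>
    if (i : ℕ) = (j : ℕ) + 1 then 1
    else if (j : ℕ) = r - 1 ∧ (i : ℕ) = 0 then tElem K ^ s else 0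

section Tau
variable (p n : ℕ) [Fact p.Prime] (K : Type) [Field K] [CharP K p]

lemma tau_coeff (x : LaurentSeries K) (g : ℤ) :
    (tauLaurent p n K x).coeff g = iterateFrobenius K p n (x.coeff g) := rfl

noncomputable def tauRingHom : LaurentSeries K →+* LaurentSeries K where
  toFun := tauLaurent p n K
  map_one' := HahnSeries.map_one (Γ := ℤ) (iterateFrobenius K p n).toMonoidWithZeroHom
  map_mul' x y := HahnSeries.map_mul (R := K) (S := K) (Γ := ℤ)
      ((iterateFrobenius K p n) : K →ₙ+* K) (x := x) (y := y)
  map_zero' := by ext g; simp [tau_coeff]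
  map_add' x y := by ext g; simp [tau_coeff, HahnSeries.coeff_add]

lemma tauRingHom_apply (x : LaurentSeries K) : tauRingHom p n K x = tauLaurent p n K x := rfl

lemma tau_ne_zero {x : LaurentSeries K} (hx : x ≠ 0) : tauLaurent p n K x ≠ 0 := by
  intro h
  apply hx
  ext g
  have h2 : (tauLaurent p n K x).coeff g = 0 := by rw [h]; rfl
  rw [tau_coeff] at h2
  have h3 : x.coeff g = 0 := (iterateFrobenius K p n).injective (by simpa using h2)
  rw [h3]; simp

lemma tau_order {x : LaurentSeries K} (hx : x ≠ 0) :
    (tauLaurent p n K x).order = x.order := by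
  apply le_antisymm
  · apply HahnSeries.order_le_of_coeff_ne_zero
    rw [tau_coeff]
    exact fun h => (HahnSeries.coeff_order_eq_zero.not.mpr hx)
      ((iterateFrobenius K p n).injective (by simpa using h))
  · apply HahnSeries.order_le_of_coeff_ne_zero
    intro h
    have := HahnSeries.coeff_order_eq_zero.not.mpr (tau_ne_zero p n K hx)
    rw [tau_coeff, h] at this
    simp at this

lemma tau_t : tauLaurent p n K (tElem K) = tElem K := by
  ext g
  rw [tau_coeff]
  simp [tElem, HahnSeries.coeff_single]

lemma tElem_ne_zero : tElem K ≠ 0 := HahnSeries.single_ne_zero one_ne_zero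

lemma tau_tpow (a : ℤ) : tauLaurent p n K (tElem K ^ a) = tElem K ^ a := by
  rw [← tauRingHom_apply, map_zpow₀, tauRingHom_apply, tau_t]

lemma tpow_ne_zero (a : ℤ) : (tElem K ^ a : LaurentSeries K) ≠ 0 :=
  zpow_ne_zero a (tElem_ne_zero K)

lemma order_tpow (a : ℤ) : (tElem K ^ a : LaurentSeries K).order = -a := by
  have ht : (tElem K).order = -1 := HahnSeries.order_single one_ne_zero
  have hpow : ∀ m : ℕ, ((tElem K ^ m : LaurentSeries K)).order = -(m : ℤ) := by
    intro m
    rw [HahnSeries.order_pow, ht]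
    simp
  cases a with
  | ofNat m => rw [Int.ofNat_eq_natCast, zpow_natCast, hpow]
  | negSucc m =>
      rw [zpow_negSucc]
      have h1 : (tElem K ^ (m + 1) : LaurentSeries K) ≠ 0 := pow_ne_zero _ (tElem_ne_zero K)
      have h2 := HahnSeries.order_mul h1 (inv_ne_zero h1)
      rw [mul_inv_cancel₀ h1, HahnSeries.order_one, hpow] at h2
      rw [Int.negSucc_eq]
      omega

end Tau

section Mat
variable (K : Type) [Field K] (r : ℕ) (s : ℤ)

lemma dieudonne_mul_apply (hr : 0 < r) {ι : Type} (M : Matrix (Fin r) ι (LaurentSeries K))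
    (i : Fin r) (j : ι) :
    (dieudonneMatrix K r s * M) i j =
      if h : 0 < (i : ℕ) then M ⟨(i : ℕ) - 1, Nat.lt_of_le_of_lt (Nat.sub_le _ _) i.isLt⟩ j
      else tElem K ^ s * M ⟨r - 1, Nat.sub_lt hr one_pos⟩ j := by
  rw [Matrix.mul_apply]
  by_cases h : 0 < (i : ℕ)
  · rw [dif_pos h]
    have hsum := Finset.sum_eq_single_of_mem
      (f := fun k => dieudonneMatrix K r s i k * M k j)
      (⟨(i : ℕ) - 1, Nat.lt_of_le_of_lt (Nat.sub_le _ _) i.isLt⟩ : Fin r)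
      (Finset.mem_univ _)
      (by
        intro b _ hb
        have hb' : (b : ℕ) ≠ (i : ℕ) - 1 := fun hh => hb (Fin.ext hh)
        have hz : dieudonneMatrix K r s i b = 0 := by
          simp only [dieudonneMatrix, Matrix.of_apply, Fin.val_mk]
          rw [if_neg (by omega), if_neg (by omega)]
        simp only [hz, zero_mul])
    rw [hsum]
    have hv : dieudonneMatrix K r s i
        ⟨(i : ℕ) - 1, Nat.lt_of_le_of_lt (Nat.sub_le _ _) i.isLt⟩ = 1 := by
      simp only [dieudonneMatrix, Matrix.of_apply, Fin.val_mk]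
      rw [if_pos (by omega)]
    simp only [hv, one_mul]
  · rw [dif_neg h]
    have hsum := Finset.sum_eq_single_of_mem
      (f := fun k => dieudonneMatrix K r s i k * M k j)
      (⟨r - 1, Nat.sub_lt hr one_pos⟩ : Fin r)
      (Finset.mem_univ _)
      (by
        intro b _ hb
        have hb' : (b : ℕ) ≠ r - 1 := fun hh => hb (Fin.ext hh)
        have hz : dieudonneMatrix K r s i b = 0 := by
          simp only [dieudonneMatrix, Matrix.of_apply, Fin.val_mk]
          rw [if_neg (by omega), if_neg (by omega)]
        simp only [hz, zero_mul])
    rw [hsum]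
    have hi0 : (i : ℕ) = 0 := by omega
    have hc1 : (0 : ℕ) ≠ (r - 1) + 1 := by omega
    have hv : dieudonneMatrix K r s i ⟨r - 1, Nat.sub_lt hr one_pos⟩ = tElem K ^ s := by
      simp [dieudonneMatrix, Matrix.of_apply, Fin.val_mk, hi0, hc1]
    simp only [hv]

lemma dieudonne_pow_apply (hr : 0 < r) :
    ∀ m, m ≤ r → ∀ i j : Fin r, (dieudonneMatrix K r s ^ m) i j =
      if (i : ℕ) = (j : ℕ) + m then 1
      else if (i : ℕ) + (r - m) = (j : ℕ) then tElem K ^ s else 0 := by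
  intro m
  induction m with
  | zero =>
      intro _ i j
      have hi := i.isLt; have hj := j.isLt
      rw [pow_zero, Matrix.one_apply]
      simp only [Fin.ext_iff]
      split_ifs <;> first | rfl | omega
  | succ m ih =>
      intro hm i j
      have hi := i.isLt; have hj := j.isLt
      rw [pow_succ', dieudonne_mul_apply K r s hr]
      by_cases h : 0 < (i : ℕ)
      · rw [dif_pos h, ih (by omega)]
        simp only [Fin.val_mk]
        split_ifs <;> first | omega | rfl
      · rw [dif_neg h, ih (by omega)]
        simp only [Fin.val_mk]
        split_ifs <;> first | omega | rfl | rw [mul_one] | rw [mul_zero]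

lemma dieudonne_pow_r (hr : 0 < r) :
    dieudonneMatrix K r s ^ r = tElem K ^ s • (1 : Matrix (Fin r) (Fin r) (LaurentSeries K)) := by
  ext i j
  have hi := i.isLt; have hj := j.isLt
  rw [dieudonne_pow_apply K r s hr r le_rfl]
  simp only [Matrix.smul_apply, Matrix.one_apply, smul_eq_mul, Fin.ext_iff]
  split_ifs <;> first | omega | rw [mul_one] | rw [mul_zero]

end Mat

section Conj
variable (p n : ℕ) [Fact p.Prime] (K : Type) [Field K] [CharP K p]
variable (r r' : ℕ) (s s' : ℤ)

lemma tau_dieudonne :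
    (dieudonneMatrix K r s).map (tauLaurent p n K) = dieudonneMatrix K r s := by
  refine Matrix.ext fun i j => ?_
  simp only [Matrix.map_apply, dieudonneMatrix, Matrix.of_apply]
  split_ifs
  · exact map_one (tauRingHom p n K)
  · exact tau_tpow p n K s
  · exact map_zero (tauRingHom p n K)

lemma iterate_map_apply (m : ℕ) (A : Matrix (Fin r') (Fin r) (LaurentSeries K)) (i j) :
    ((fun B : Matrix (Fin r') (Fin r) (LaurentSeries K) => B.map (tauLaurent p n K))^[m] A) i j
      = (tauLaurent p n K)^[m] (A i j) := by
  induction m generalizing A with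
  | zero => rfl
  | succ m ih =>
      rw [Function.iterate_succ_apply, Function.iterate_succ_apply, ih]
      rfl

lemma semiconj_iterate (hr : 0 < r) (hr' : 0 < r') :
    ∀ (m : ℕ) (A : Matrix (Fin r') (Fin r) (LaurentSeries K)),
      A * dieudonneMatrix K r s = dieudonneMatrix K r' s' * A.map (tauLaurent p n K) →
      A * dieudonneMatrix K r s ^ m = dieudonneMatrix K r' s' ^ m *
        (fun B : Matrix (Fin r') (Fin r) (LaurentSeries K) =>
          B.map (tauLaurent p n K))^[m] A := by
  intro m
  induction m with
  | zero => intro A _; simp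
  | succ m ih =>
      intro A hA
      have hmap1 : ∀ (X : Matrix (Fin r') (Fin r) (LaurentSeries K))
          (Y : Matrix (Fin r) (Fin r) (LaurentSeries K)),
          (X * Y).map (tauLaurent p n K) =
            X.map (tauLaurent p n K) * Y.map (tauLaurent p n K) :=
        fun X Y => Matrix.map_mul (f := tauRingHom p n K)
      have hmap2 : ∀ (X : Matrix (Fin r') (Fin r') (LaurentSeries K))
          (Y : Matrix (Fin r') (Fin r) (LaurentSeries K)),
          (X * Y).map (tauLaurent p n K) =
            X.map (tauLaurent p n K) * Y.map (tauLaurent p n K) :=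
        fun X Y => Matrix.map_mul (f := tauRingHom p n K)
      have hA' : A.map (tauLaurent p n K) * dieudonneMatrix K r s =
          dieudonneMatrix K r' s' * (A.map (tauLaurent p n K)).map (tauLaurent p n K) := by
        have h1 : (A * dieudonneMatrix K r s).map (tauLaurent p n K) =
            A.map (tauLaurent p n K) * dieudonneMatrix K r s := by
          rw [hmap1, tau_dieudonne]
        have h2 : (dieudonneMatrix K r' s' * A.map (tauLaurent p n K)).map (tauLaurent p n K) =
            dieudonneMatrix K r' s' * (A.map (tauLaurent p n K)).map (tauLaurent p n K) := by
          rw [hmap2, tau_dieudonne]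
        rw [← h1, hA, h2]
      calc A * dieudonneMatrix K r s ^ (m + 1)
          = A * (dieudonneMatrix K r s * dieudonneMatrix K r s ^ m) := by
            rw [pow_succ']
        _ = (A * dieudonneMatrix K r s) * dieudonneMatrix K r s ^ m :=
            (Matrix.mul_assoc A _ _).symm
        _ = dieudonneMatrix K r' s' * (A.map (tauLaurent p n K) * dieudonneMatrix K r s ^ m) := by
            rw [hA, Matrix.mul_assoc]
        _ = dieudonneMatrix K r' s' * (dieudonneMatrix K r' s' ^ m *
              (fun B : Matrix (Fin r') (Fin r) (LaurentSeries K) =>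
                B.map (tauLaurent p n K))^[m] (A.map (tauLaurent p n K))) := by
            rw [ih _ hA']
        _ = (dieudonneMatrix K r' s' * dieudonneMatrix K r' s' ^ m) *
              (fun B : Matrix (Fin r') (Fin r) (LaurentSeries K) =>
                B.map (tauLaurent p n K))^[m] (A.map (tauLaurent p n K)) :=
            (Matrix.mul_assoc _ _ _).symm
        _ = dieudonneMatrix K r' s' ^ (m + 1) *
              (fun B : Matrix (Fin r') (Fin r) (LaurentSeries K) =>
                B.map (tauLaurent p n K))^[m + 1] A := by
            rw [← pow_succ', Function.iterate_succ_apply]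

end Conj

theorem stmt_16
    (p n : ℕ) [Fact p.Prime] (hn : 0 < n)
    (K : Type) [Field K] [CharP K p] [IsSepClosed K]
    (r r' : ℕ) (hr : 0 < r) (hr' : 0 < r') (s s' : ℤ)
    (hgcd : Int.gcd (r : ℤ) s = 1) (hgcd' : Int.gcd (r' : ℤ) s' = 1)
    (hne : s * (r' : ℤ) ≠ s' * (r : ℤ))
    (G : Matrix (Fin r') (Fin r) (LaurentSeries K))
    (hG : G * dieudonneMatrix K r s =
      dieudonneMatrix K r' s' * G.map (tauLaurent p n K)) :
    G = 0 := by
  set m := r * r' with hm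
  have key := semiconj_iterate p n K r r' s s' hr hr' m G hG
  -- compute the two matrix powers
  have hfun : ∀ (k : ℕ) (a : ℤ) (ι : Type) [Fintype ι],
      ((fun _ : ι => tElem K ^ a) ^ k) = fun _ : ι => (tElem K ^ (a * (k : ℤ)) : LaurentSeries K) := by
    intro k a ι _
    funext x
    rw [Pi.pow_apply, ← zpow_natCast, ← zpow_mul]
  have hT : dieudonneMatrix K r s ^ m =
      Matrix.diagonal (fun _ : Fin r => (tElem K ^ (s * r') : LaurentSeries K)) := by
    rw [hm, pow_mul, dieudonne_pow_r K r s hr, Matrix.smul_one_eq_diagonal,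
      Matrix.diagonal_pow, hfun]
  have hT' : dieudonneMatrix K r' s' ^ m =
      Matrix.diagonal (fun _ : Fin r' => (tElem K ^ (s' * r) : LaurentSeries K)) := by
    rw [hm, mul_comm r r', pow_mul, dieudonne_pow_r K r' s' hr', Matrix.smul_one_eq_diagonal,
      Matrix.diagonal_pow, hfun]
  rw [hT, hT'] at key
  -- entrywise
  refine Matrix.ext fun i j => ?_
  by_contra hg
  have hg' : G i j ≠ 0 := by simpa using hg
  have hentry : G i j * (tElem K ^ (s * r') : LaurentSeries K) =
      (tElem K ^ (s' * r) : LaurentSeries K) * (tauLaurent p n K)^[m] (G i j) := by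
    have h0 := congrFun (congrFun key i) j
    rw [Matrix.mul_diagonal, Matrix.diagonal_mul, iterate_map_apply p n K r r' m G i j] at h0
    exact h0
  -- iterated tau preserves order and nonvanishing
  have hiter : ∀ (k : ℕ) (x : LaurentSeries K), x ≠ 0 →
      (tauLaurent p n K)^[k] x ≠ 0 ∧ ((tauLaurent p n K)^[k] x).order = x.order := by
    intro k
    induction k with
    | zero => intro x hx; exact ⟨hx, rfl⟩
    | succ k ih =>
        intro x hx
        obtain ⟨h1, h2⟩ := ih x hx
        rw [Function.iterate_succ_apply']
        exact ⟨tau_ne_zero p n K h1, by rw [tau_order p n K h1, h2]⟩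
  obtain ⟨hH, hHord⟩ := hiter m (G i j) hg'
  have h1 := congrArg HahnSeries.order hentry
  rw [HahnSeries.order_mul hg' (tpow_ne_zero K _),
      HahnSeries.order_mul (tpow_ne_zero K _) hH,
      order_tpow, order_tpow, hHord] at h1
  exact hne (by omega)
end

section
/- Let K be algebraically closed and let M be an effective t-motif over K. Then there exists an integer N such that for all n ≥ N, the module M equipped with the twisted semilinear map σ_n defined by σ_n(m) = (t−θ)ⁿ·σ(m) (which represents the Carlitz twist M ⊗ Cⁿ) is finitely generated over K[σ_n]: there exists a finite subset S ⊆ M such that ⋃_{j≥0} σ_nʲ(S) spans M as a K-vector space. -/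
open Polynomial

private lemma deg_mul_lt_aux {K : Type} [Field K] (x y : Polynomial K) (a B : ℕ)
    (hx : x.degree ≤ (a : WithBot ℕ)) (hy : y.degree < ((B : ℕ) : WithBot ℕ)) :
    (x * y).degree < (((a + B : ℕ)) : WithBot ℕ) := by
  calc (x * y).degree ≤ x.degree + y.degree := degree_mul_le x y
    _ ≤ (a : WithBot ℕ) + y.degree := add_le_add hx le_rfl
    _ < (a : WithBot ℕ) + (B : WithBot ℕ) := WithBot.add_lt_add_left (by simp) hy
    _ = (((a + B : ℕ)) : WithBot ℕ) := by push_cast; rfl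

theorem stmt_18
    (p n : ℕ) [Fact p.Prime] (hn : 0 < n)
    (K : Type) [Field K] [CharP K p] [IsAlgClosed K] (θ : K)
    (r : ℕ) (S : Matrix (Fin r) (Fin r) (Polynomial K))
    (u₀ : Kˣ) (d : ℕ)
    (hdet : S.det = C (u₀ : K) * (X - C θ) ^ d) :
    ∃ N : ℕ, ∀ m ≥ N,
      ∃ S₀ : Finset (Fin r → Polynomial K),
        Submodule.span K
          {x : Fin r → Polynomial K | ∃ m₀ ∈ S₀, ∃ j : ℕ,
            x = (fun w : Fin r → Polynomial K =>
              ((X - C θ) ^ m) •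
                S.mulVec fun i =>
                  Polynomial.mapRingHom (iterateFrobenius K p n) (w i))^[j] m₀}
          = ⊤ := by
  classical
  set A : ℕ := Finset.univ.sup (fun ij : Fin r × Fin r => ((S.adjugate) ij.1 ij.2).natDegree)
    with hA
  refine ⟨A + 1, fun m hm => ?_⟩
  set D : ℕ := m + d with hD
  have hAD : A + 1 ≤ D := le_trans hm (Nat.le_add_right m d)
  have hmon : ((X - C θ) ^ D : Polynomial K).Monic := (monic_X_sub_C θ).pow D
  have hdegq : ((X - C θ) ^ D : Polynomial K).degree = (D : WithBot ℕ) := by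
    rw [degree_pow, degree_X_sub_C]
    simp [nsmul_eq_mul]
  set S₀ : Finset (Fin r → Polynomial K) := (Finset.univ ×ˢ Finset.range D).image
      (fun ik : Fin r × ℕ => Pi.single ik.1 ((X : Polynomial K) ^ ik.2)) with hS₀
  refine ⟨S₀, ?_⟩
  set F : (Fin r → Polynomial K) → (Fin r → Polynomial K) := fun w : Fin r → Polynomial K =>
      ((X - C θ) ^ m) •
        S.mulVec fun i =>
          Polynomial.mapRingHom (iterateFrobenius K p n) (w i)
    with hF
  set G : Set (Fin r → Polynomial K) := {x : Fin r → Polynomial K | ∃ m₀ ∈ S₀, ∃ j : ℕ,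
      x = F^[j] m₀} with hG
  -- semilinearity of F with respect to K-scalars
  have hτsmul : ∀ (c : K) (f : Polynomial K),
      Polynomial.mapRingHom (iterateFrobenius K p n) (c • f)
        = (c ^ p ^ n) • Polynomial.mapRingHom (iterateFrobenius K p n) f := by
    intro c f
    simp only [coe_mapRingHom, smul_eq_C_mul, Polynomial.map_mul, map_C, iterateFrobenius_def]
  have hFadd : ∀ v w : Fin r → Polynomial K, F (v + w) = F v + F w := by
    intro v w
    simp only [hF]
    have h1 : (fun i => Polynomial.mapRingHom (iterateFrobenius K p n) ((v + w) i))
        = (fun i => Polynomial.mapRingHom (iterateFrobenius K p n) (v i))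
          + (fun i => Polynomial.mapRingHom (iterateFrobenius K p n) (w i)) := by
      funext i; simp [map_add]
    rw [h1, Matrix.mulVec_add, smul_add]
  have hFsmul : ∀ (c : K) (v : Fin r → Polynomial K), F (c • v) = (c ^ p ^ n) • F v := by
    intro c v
    simp only [hF]
    have h1 : (fun i => Polynomial.mapRingHom (iterateFrobenius K p n) ((c • v) i))
        = (c ^ p ^ n) • (fun i => Polynomial.mapRingHom (iterateFrobenius K p n) (v i)) := by
      funext i
      simpa using hτsmul c (v i)
    rw [h1, Matrix.mulVec_smul, smul_comm]
  have hFzero : F 0 = 0 := by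
    have h1 : (fun i => Polynomial.mapRingHom (iterateFrobenius K p n) ((0 : Fin r → Polynomial K) i))
        = (0 : Fin r → Polynomial K) := by
      funext i; simp
    simp only [hF, h1, Matrix.mulVec_zero, smul_zero]
  -- stability of the span under F
  have hGF : ∀ x ∈ G, F x ∈ G := by
    rintro x ⟨m₀, hm₀, j, rfl⟩
    exact ⟨m₀, hm₀, j + 1, (Function.iterate_succ_apply' F j m₀).symm⟩
  have hVF : ∀ v ∈ Submodule.span K G, F v ∈ Submodule.span K G := by
    intro v hv
    induction hv using Submodule.span_induction with
    | mem x hx => exact Submodule.subset_span (hGF x hx)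
    | zero => rw [hFzero]; exact Submodule.zero_mem _
    | add x y hx hy ihx ihy => rw [hFadd]; exact Submodule.add_mem _ ihx ihy
    | smul c x hx ihx => rw [hFsmul]; exact Submodule.smul_mem _ _ ihx
  -- base case : low degree vectors lie in the span
  have hbase : ∀ v : Fin r → Polynomial K, (∀ i, (v i).degree < (D : WithBot ℕ)) →
      v ∈ Submodule.span K G := by
    intro v hv
    rw [← Finset.univ_sum_single v]
    refine Submodule.sum_mem _ (fun i _ => ?_)
    have hvi : v i = ∑ k ∈ (v i).support, (v i).coeff k • (X : Polynomial K) ^ k := by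
      conv_lhs => rw [← sum_C_mul_X_pow_eq (v i)]
      rw [Polynomial.sum]
      exact Finset.sum_congr rfl (fun k _ => (smul_eq_C_mul _).symm)
    rw [show (Pi.single i (v i) : Fin r → Polynomial K)
          = (LinearMap.single K (fun _ : Fin r => Polynomial K) i) (v i) from rfl,
        hvi, map_sum]
    refine Submodule.sum_mem _ (fun k hk => ?_)
    rw [map_smul]
    refine Submodule.smul_mem _ _ (Submodule.subset_span ?_)
    refine ⟨Pi.single i ((X : Polynomial K) ^ k), ?_, 0, rfl⟩
    rw [hS₀]
    refine Finset.mem_image.2 ⟨⟨i, k⟩, ?_, rfl⟩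
    simp only [Finset.mem_product, Finset.mem_univ, Finset.mem_range, true_and]
    have h1 : (k : WithBot ℕ) ≤ (v i).degree :=
      Polynomial.le_degree_of_ne_zero (Polynomial.mem_support_iff.1 hk)
    exact_mod_cast lt_of_le_of_lt h1 (hv i)
  -- degree of quotient through division
  have hdivdeg : ∀ (f : Polynomial K) (B : ℕ), f.degree < (((D + B : ℕ)) : WithBot ℕ) →
      (f /ₘ ((X - C θ) ^ D)).degree < (B : WithBot ℕ) := by
    intro f B hf
    by_cases h0 : f /ₘ ((X - C θ) ^ D) = 0
    · rw [h0, degree_zero]; exact WithBot.bot_lt_coe B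
    · have hle : degree ((X - C θ) ^ D) ≤ degree f := by
        by_contra hlt
        exact h0 ((divByMonic_eq_zero_iff hmon).2 (lt_of_not_ge hlt))
      have h2 := degree_add_divByMonic hmon hle
      rw [hdegq] at h2
      have h3 : (D : WithBot ℕ) + (f /ₘ ((X - C θ) ^ D)).degree
          < (D : WithBot ℕ) + (B : WithBot ℕ) := by
        rw [h2]
        calc f.degree < (((D + B : ℕ)) : WithBot ℕ) := hf
          _ = (D : WithBot ℕ) + (B : WithBot ℕ) := by push_cast; rfl
      exact lt_of_add_lt_add_left h3
  -- main induction
  have main : ∀ (b : ℕ) (v : Fin r → Polynomial K),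
      (∀ i, (v i).degree < (((D + b : ℕ)) : WithBot ℕ)) → v ∈ Submodule.span K G := by
    intro b
    induction b with
    | zero =>
      intro v hv
      exact hbase v (by simpa using hv)
    | succ b ih =>
      intro v hv
      set g : Fin r → Polynomial K := fun i => v i /ₘ ((X - C θ) ^ D) with hg
      set s : Fin r → Polynomial K := fun i => v i %ₘ ((X - C θ) ^ D) with hs
      have hgdeg : ∀ i, (g i).degree < (((b + 1 : ℕ)) : WithBot ℕ) :=
        fun i => hdivdeg (v i) (b + 1) (hv i)
      set w : Fin r → Polynomial K := fun i =>
        Polynomial.map ((iterateFrobeniusEquiv K p n).symm : K →+* K)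
          (C ((u₀⁻¹ : Kˣ) : K) * (S.adjugate.mulVec g i)) with hw
      have hcomp : (iterateFrobenius K p n).comp
          ((iterateFrobeniusEquiv K p n).symm : K →+* K) = RingHom.id K := by
        ext x
        simp [← iterateFrobeniusEquiv_apply]
      have hτw : ∀ i, Polynomial.mapRingHom (iterateFrobenius K p n) (w i)
          = C ((u₀⁻¹ : Kˣ) : K) * (S.adjugate.mulVec g i) := by
        intro i
        rw [hw]
        simp only [coe_mapRingHom]
        rw [Polynomial.map_map, hcomp, Polynomial.map_id]
      have hFw : F w = ((X - C θ) ^ D) • g := by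
        simp only [hF]
        have h1 : (fun i => Polynomial.mapRingHom (iterateFrobenius K p n) (w i))
            = (C ((u₀⁻¹ : Kˣ) : K)) • (S.adjugate.mulVec g) := by
          funext i; rw [hτw i]; rfl
        rw [h1, Matrix.mulVec_smul, Matrix.mulVec_mulVec, Matrix.mul_adjugate, hdet,
          Matrix.smul_mulVec, Matrix.one_mulVec, smul_smul, smul_smul]
        congr 1
        rw [hD, pow_add]
        have hu : (C ((u₀⁻¹ : Kˣ) : K) : Polynomial K) * C ((u₀ : Kˣ) : K) = 1 := by
          rw [← C_mul, Units.val_inv_eq_inv_val, inv_mul_cancel₀ (Units.ne_zero u₀), C_1]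
        linear_combination ((X - C θ) ^ m * (X - C θ) ^ d) * hu
      have hvdec : v = s + F w := by
        rw [hFw]
        funext i
        simp only [Pi.add_apply, Pi.smul_apply, smul_eq_mul, hs, hg]
        exact (modByMonic_add_div (v i) _).symm
      have hwdeg : ∀ i, (w i).degree < (((D + b : ℕ)) : WithBot ℕ) := by
        intro i
        rw [hw]
        simp only
        rw [Polynomial.degree_map]
        have h2 : (S.adjugate.mulVec g i).degree < (((A + (b + 1) : ℕ)) : WithBot ℕ) := by
          have hmv : S.adjugate.mulVec g i = ∑ j, S.adjugate i j * g j := by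
            rw [Matrix.mulVec]; rfl
          rw [hmv]
          refine lt_of_le_of_lt (degree_sum_le _ _) ?_
          rw [Finset.sup_lt_iff (WithBot.bot_lt_coe _)]
          intro j _
          refine deg_mul_lt_aux _ _ A (b + 1) ?_ (hgdeg j)
          refine le_trans degree_le_natDegree ?_
          exact_mod_cast Finset.le_sup (f := fun ij : Fin r × Fin r =>
            ((S.adjugate) ij.1 ij.2).natDegree) (Finset.mem_univ (i, j))
        have h3 : (C ((u₀⁻¹ : Kˣ) : K) * (S.adjugate.mulVec g i)).degree
            ≤ (S.adjugate.mulVec g i).degree := by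
          refine le_trans (degree_mul_le _ _) ?_
          calc (C ((u₀⁻¹ : Kˣ) : K)).degree + (S.adjugate.mulVec g i).degree
              ≤ 0 + (S.adjugate.mulVec g i).degree := add_le_add degree_C_le le_rfl
            _ = (S.adjugate.mulVec g i).degree := zero_add _
        refine lt_of_le_of_lt h3 (lt_of_lt_of_le h2 ?_)
        exact_mod_cast Nat.cast_le.2 (by omega : A + (b + 1) ≤ D + b)
      rw [hvdec]
      refine Submodule.add_mem _ ?_ (hVF w (ih w hwdeg))
      refine hbase s (fun i => ?_)
      have := degree_modByMonic_lt (v i) hmon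
      rw [hdegq] at this
      exact this
  rw [eq_top_iff]
  rintro v -
  refine main ((Finset.univ.sup fun i => (v i).natDegree) + 1) v (fun i => ?_)
  refine lt_of_le_of_lt degree_le_natDegree ?_
  have h1 : (v i).natDegree ≤ Finset.univ.sup fun i => (v i).natDegree :=
    Finset.le_sup (f := fun i => (v i).natDegree) (Finset.mem_univ i)
  exact_mod_cast Nat.lt_of_le_of_lt h1 (by omega)
end
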